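/- D satisfies the ascending chain condition on principal ideals (ACCP) if and only if both of the following hold: (i) there is no infinite sequence a₀, a₁, a₂, … of nonzero nonunit elements of D such that for every i the quotient aᵢ/aᵢ₊₁ lies in D and is irreducible; and (ii) every nonzero nonunit b ∈ D that cannot be written as b = ξc with ξ ∈ D irreducible and c ∈ D a nonzero nonunit is itself irreducible. -/

import Mathlib

/-- An element `b` is "bad" if it starts an infinite strictly descending divisibility chain
of nonzero nonunits. -/
def BadChain (D : Type*) [CommRing D] (b : D) : Prop :=
  ∃ g : ℕ → D, g 0 = b ∧ (∀ i, g i ≠ 0 ∧ ¬ IsUnit (g i)) ∧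
    ∀ i, ∃ q : D, ¬ IsUnit q ∧ g i = q * g (i + 1)

theorem badChain_mul {D : Type*} [CommRing D] [IsDomain D] {c : D} (d : D) (hd0 : d ≠ 0)
    (hdu : ¬ IsUnit d) (hc : BadChain D c) : BadChain D (d * c) := by
  obtain ⟨g, hg0, hprop, hq⟩ := hc
  have hc0 : c ≠ 0 := hg0 ▸ (hprop 0).1
  refine ⟨fun n => Nat.casesOn n (d * c) g, rfl, ?_, ?_⟩
  · intro i
    cases i with
    | zero =>
      exact ⟨mul_ne_zero hd0 hc0, fun h => hdu (isUnit_of_mul_isUnit_left h)⟩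
    | succ n => exact hprop n
  · intro i
    cases i with
    | zero => exact ⟨d, hdu, by simp [hg0]⟩
    | succ n => exact hq n

theorem accp_iff_paths_terminate_at_atoms (D : Type*) [CommRing D] [IsDomain D] :
    (∀ f : ℕ → Ideal D, (∀ i, (f i).IsPrincipal) → (∀ i, f i ≤ f (i + 1)) →
        ∃ N, ∀ n, N ≤ n → f n = f N) ↔
      ((¬ ∃ a : ℕ → D, (∀ i, a i ≠ 0 ∧ ¬ IsUnit (a i)) ∧
          ∀ i, ∃ π : D, Irreducible π ∧ a i = π * a (i + 1)) ∧
        (∀ b : D, b ≠ 0 → ¬ IsUnit b →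
          (¬ ∃ ξ c : D, Irreducible ξ ∧ c ≠ 0 ∧ ¬ IsUnit c ∧ b = ξ * c) →
          Irreducible b)) := by
  constructor
  · intro accp
    -- auxiliary: no infinite chain with nonunit quotients at all
    have aux : ¬ ∃ g : ℕ → D, (∀ i, g i ≠ 0) ∧
        ∀ i, ∃ q : D, ¬ IsUnit q ∧ g i = q * g (i + 1) := by
      rintro ⟨g, hg0, hgq⟩
      obtain ⟨N, hN⟩ := accp (fun i => Ideal.span {g i}) (fun i => ⟨⟨g i, rfl⟩⟩)
        (fun i => by
          obtain ⟨q, _, heq⟩ := hgq i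
          exact Ideal.span_singleton_le_span_singleton.mpr ⟨q, by rw [heq]; ring⟩)
      have hEq := hN (N + 1) (Nat.le_succ N)
      obtain ⟨q, hqu, heq⟩ := hgq N
      have h1 : g (N + 1) ∈ Ideal.span {g N} := by
        rw [← hEq]; exact Ideal.subset_span rfl
      obtain ⟨r, hr⟩ := Ideal.mem_span_singleton'.1 h1
      have : g N * 1 = g N * (q * r) := by
        rw [mul_one]
        calc g N = q * g (N + 1) := heq
        _ = q * (r * g N) := by rw [hr]
        _ = g N * (q * r) := by ring
      have h2 : (1 : D) = q * r := mul_left_cancel₀ (hg0 N) this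
      exact hqu (IsUnit.of_mul_eq_one r h2.symm)
    constructor
    · rintro ⟨a, ha, hq⟩
      exact aux ⟨a, fun i => (ha i).1, fun i =>
        ⟨(hq i).choose, (hq i).choose_spec.1.not_isUnit, (hq i).choose_spec.2⟩⟩
    · intro b hb0 hbu hno
      by_contra hirr
      -- b = x * y with x, y nonunits; x has no irreducible divisor
      rw [irreducible_iff] at hirr
      push_neg at hirr
      obtain ⟨x, y, hxy, hxu, hyu⟩ := hirr hbu
      have hx0 : x ≠ 0 := fun h => hb0 (by rw [hxy, h, zero_mul])
      have hy0 : y ≠ 0 := fun h => hb0 (by rw [hxy, h, mul_zero])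
      -- x has no irreducible divisor
      have hNAx : x ≠ 0 ∧ ¬ IsUnit x ∧ ∀ π : D, Irreducible π → ¬ π ∣ x := by
        refine ⟨hx0, hxu, fun π hπ ⟨d, hd⟩ => ?_⟩
        have hd0 : d ≠ 0 := fun h => hx0 (by rw [hd, h, mul_zero])
        have : b = π * (d * y) := by rw [hxy, hd]; ring
        exact hno ⟨π, d * y, hπ, mul_ne_zero hd0 hy0,
          fun h => hyu (isUnit_of_mul_isUnit_right h), this⟩
      -- every such element decomposes with a cofactor of the same kind
      have step : ∀ z : {z : D // z ≠ 0 ∧ ¬ IsUnit z ∧ ∀ π : D, Irreducible π → ¬ π ∣ z},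
          ∃ w : {z : D // z ≠ 0 ∧ ¬ IsUnit z ∧ ∀ π : D, Irreducible π → ¬ π ∣ z},
            ∃ q : D, ¬ IsUnit q ∧ z.1 = q * w.1 := by
        rintro ⟨z, hz0, hzu, hza⟩
        have hzirr : ¬ Irreducible z := fun h => hza z h dvd_rfl
        rw [irreducible_iff] at hzirr
        push_neg at hzirr
        obtain ⟨u, v, huv, huu, hvu⟩ := hzirr hzu
        have hv0 : v ≠ 0 := fun h => hz0 (by rw [huv, h, mul_zero])
        exact ⟨⟨v, hv0, hvu, fun π hπ hdvd => hza π hπ (hdvd.trans ⟨u, by rw [huv]; ring⟩)⟩,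
          u, huu, huv⟩
      choose nxt q hqu hqe using step
      set z0 : {z : D // z ≠ 0 ∧ ¬ IsUnit z ∧ ∀ π : D, Irreducible π → ¬ π ∣ z} :=
        ⟨x, hNAx⟩ with hz0def
      refine aux ⟨fun n => (nxt^[n] z0).1, fun n => (nxt^[n] z0).2.1, fun n => ?_⟩
      refine ⟨q (nxt^[n] z0), hqu _, ?_⟩
      simp only [Function.iterate_succ_apply']
      exact hqe (nxt^[n] z0)
  · rintro ⟨h1, h2⟩ f hP hle
    by_contra hcon
    push_neg at hcon
    have mono : Monotone f := monotone_nat_of_le_succ hle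
    -- strictly increasing subsequence
    have hstep : ∀ N : ℕ, ∃ n : ℕ, f N < f n := by
      intro N
      obtain ⟨n, hn, hne⟩ := hcon N
      exact ⟨n, lt_of_le_of_ne (mono hn) (Ne.symm hne)⟩
    choose nx hnx using hstep
    set idx : ℕ → ℕ := fun k => nx^[k] 0 with hidx
    have hlt : ∀ k, f (idx k) < f (idx (k + 1)) := by
      intro k
      have : idx (k + 1) = nx (idx k) := Function.iterate_succ_apply' nx k 0
      rw [this]; exact hnx (idx k)
    -- generators
    have hgen : ∀ i : ℕ, ∃ x : D, f i = Ideal.span {x} := by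
      intro i
      obtain ⟨x, hx⟩ := (hP i).principal
      exact ⟨x, hx⟩
    choose gen hgenspec using hgen
    set y : ℕ → D := fun k => gen (idx (k + 1)) with hy
    have hspan : ∀ k, Ideal.span {y k} < Ideal.span {y (k + 1)} := by
      intro k
      rw [← hgenspec (idx (k + 1)), ← hgenspec (idx (k + 2))]
      exact hlt (k + 1)
    have hy0 : ∀ k, y k ≠ 0 := by
      intro k h
      have := hlt k
      rw [hgenspec (idx (k + 1))] at this
      rw [show y k = gen (idx (k+1)) from rfl] at h
      rw [h, Ideal.span_singleton_eq_bot.mpr rfl] at this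
      exact not_lt_bot this
    have hyu : ∀ k, ¬ IsUnit (y k) := by
      intro k h
      have := hspan k
      rw [Ideal.span_singleton_eq_top.mpr h] at this
      exact not_top_lt this
    have hyq : ∀ k, ∃ q : D, ¬ IsUnit q ∧ y k = q * y (k + 1) := by
      intro k
      have hdvd : y (k + 1) ∣ y k :=
        Ideal.span_singleton_le_span_singleton.mp (hspan k).le
      obtain ⟨q, hq⟩ := hdvd
      refine ⟨q, fun hqu => ?_, by rw [hq]; ring⟩
      have : Associated (y (k + 1)) (y k) := ⟨hqu.unit, by rw [hq]; simp⟩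
      exact (hspan k).ne (Ideal.span_singleton_eq_span_singleton.mpr this.symm)
    -- y 0 is bad
    have hbad : BadChain D (y 0) := ⟨y, rfl, fun i => ⟨hy0 i, hyu i⟩, hyq⟩
    -- every bad element factors as (irreducible) * (bad)
    have keystep : ∀ b : {b : D // BadChain D b},
        ∃ c : {b : D // BadChain D b}, ∃ π : D, Irreducible π ∧ b.1 = π * c.1 := by
      rintro ⟨b, g, hg0, hprop, hq⟩
      obtain ⟨q, hqu, heq⟩ := hq 0
      have hq0 : q ≠ 0 := fun h => (hprop 0).1 (by rw [heq, h, zero_mul])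
      have hbad1 : BadChain D (g 1) :=
        ⟨fun n => g (n + 1), rfl, fun i => hprop (i + 1), fun i => hq (i + 1)⟩
      by_cases hqi : Irreducible q
      · refine ⟨⟨g 1, hbad1⟩, q, hqi, ?_⟩
        show b = q * g 1
        rw [← hg0, heq]
      · have := mt (h2 q hq0 hqu) hqi
        rw [not_not] at this
        obtain ⟨ξ, c, hξ, hc0, hcu, hqe⟩ := this
        refine ⟨⟨c * g 1, badChain_mul c hc0 hcu hbad1⟩, ξ, hξ, ?_⟩
        show b = ξ * (c * g 1)
        rw [← hg0, heq, hqe]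
        ring
    choose nxt π hπ hπe using keystep
    set b0 : {b : D // BadChain D b} := ⟨y 0, hbad⟩ with hb0
    apply h1
    refine ⟨fun n => (nxt^[n] b0).1, fun n => ?_, fun n => ?_⟩
    · show ((nxt^[n] b0) : D) ≠ 0 ∧ ¬ IsUnit ((nxt^[n] b0) : D)
      obtain ⟨g, hg0, hprop, _⟩ := (nxt^[n] b0).2
      exact hg0 ▸ hprop 0
    · refine ⟨π (nxt^[n] b0), hπ _, ?_⟩
      simp only [Function.iterate_succ_apply']
      exact hπe (nxt^[n] b0)
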